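/- arXiv:2505.22235 — 4 statements merged into one kernel-verified Lean document; each statement's English description precedes it below -/
import Mathlib

section
/- Let Φ ∈ ℝ^{N×r}, K^w ∈ ℝ^{N×N} symmetric positive definite, y ∈ ℝᴺ, σ > 0, and suppose ΦΦᵀ + σ²K^w is invertible. Then for any θ ∈ ℝ^r and c ∈ ℝᴺ with Φθ + c = y, it holds that ‖θ‖₂² + cᵀ(σ²K^w)⁻¹c ≥ yᵀ(ΦΦᵀ + σ²K^w)⁻¹y. -/
open Matrix

/-- Minimum joint weighted norm of any decomposition y = Φθ + c lower-bounds: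
‖θ‖₂² + cᵀ(σ²K^w)⁻¹c ≥ yᵀ(ΦΦᵀ + σ²K^w)⁻¹y. -/
theorem stmt9 (N r : ℕ) (Φ : Matrix (Fin N) (Fin r) ℝ)
    (Kw : Matrix (Fin N) (Fin N) ℝ) (hKw : Kw.PosDef)
    (y : Fin N → ℝ) (σ : ℝ) (hσ : 0 < σ)
    (hinv : IsUnit (Φ * Φᵀ + σ ^ 2 • Kw))
    (θ : Fin r → ℝ) (c : Fin N → ℝ) (hdata : Φ *ᵥ θ + c = y) :
    y ⬝ᵥ ((Φ * Φᵀ + σ ^ 2 • Kw)⁻¹ *ᵥ y) ≤ θ ⬝ᵥ θ + c ⬝ᵥ ((σ ^ 2 • Kw)⁻¹ *ᵥ c) := by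
  set A : Matrix (Fin N) (Fin N) ℝ := σ ^ 2 • Kw with hA
  have hApd : A.PosDef := by
    apply Matrix.PosDef.of_dotProduct_mulVec_pos
    · show Aᴴ = A
      rw [hA, conjTranspose_smul, hKw.isHermitian.eq]
      norm_num
    · intro x hx
      have := hKw.dotProduct_mulVec_pos hx
      simp only [hA, smul_mulVec, dotProduct_smul, smul_eq_mul]
      positivity
  have hAinvpd : A⁻¹.PosDef := hApd.inv
  set M : Matrix (Fin N) (Fin N) ℝ := Φ * Φᵀ + A with hM
  have hMdet : IsUnit M.det := (Matrix.isUnit_iff_isUnit_det M).mp hinv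
  set z : Fin N → ℝ := M⁻¹ *ᵥ y with hzdef
  have hz : M *ᵥ z = y := by
    rw [hzdef, mulVec_mulVec, Matrix.mul_nonsing_inv M hMdet, one_mulVec]
  -- symmetry facts
  have hAsym : Aᵀ = A := hApd.isHermitian
  have hAinvsym : (A⁻¹)ᵀ = A⁻¹ := hApd.isHermitian.inv
  have hAinvA : A⁻¹ *ᵥ (A *ᵥ z) = z := by
    rw [mulVec_mulVec, Matrix.nonsing_inv_mul A ((Matrix.isUnit_iff_isUnit_det A).mp hApd.isUnit), one_mulVec]
  -- dot product swap for symmetric matrices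
  have swap : ∀ (B : Matrix (Fin N) (Fin N) ℝ), Bᵀ = B → ∀ (u v : Fin N → ℝ),
      u ⬝ᵥ (B *ᵥ v) = (B *ᵥ u) ⬝ᵥ v := by
    intro B hB u v
    rw [dotProduct_mulVec, ← mulVec_transpose, hB]
  set u : Fin r → ℝ := θ - Φᵀ *ᵥ z with hu
  set v : Fin N → ℝ := c - A *ᵥ z with hv
  have hu0 : 0 ≤ u ⬝ᵥ u := by
    have : ∀ i, 0 ≤ u i * u i := fun i => mul_self_nonneg _
    exact Finset.sum_nonneg fun i _ => this i
  have hv0 : 0 ≤ v ⬝ᵥ (A⁻¹ *ᵥ v) := by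
    rcases eq_or_ne v 0 with h | h
    · simp [h]
    · exact le_of_lt (by simpa using hAinvpd.dotProduct_mulVec_pos h)
  -- expand the key identity
  have key : u ⬝ᵥ u + v ⬝ᵥ (A⁻¹ *ᵥ v)
      = θ ⬝ᵥ θ + c ⬝ᵥ (A⁻¹ *ᵥ c) - y ⬝ᵥ z := by
    have e1 : θ ⬝ᵥ (Φᵀ *ᵥ z) = (Φ *ᵥ θ) ⬝ᵥ z := by
      rw [dotProduct_mulVec, ← mulVec_transpose, transpose_transpose]
    have e2 : (Φᵀ *ᵥ z) ⬝ᵥ (Φᵀ *ᵥ z) = z ⬝ᵥ ((Φ * Φᵀ) *ᵥ z) := by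
      rw [dotProduct_mulVec, ← mulVec_transpose, transpose_transpose, mulVec_mulVec,
        dotProduct_comm]
    have e3' : (A *ᵥ z) ⬝ᵥ (A⁻¹ *ᵥ c) = z ⬝ᵥ c := by
      rw [swap A⁻¹ hAinvsym, hAinvA]
    have e4 : c ⬝ᵥ (A⁻¹ *ᵥ (A *ᵥ z)) = c ⬝ᵥ z := by rw [hAinvA]
    have e5 : (A *ᵥ z) ⬝ᵥ (A⁻¹ *ᵥ (A *ᵥ z)) = z ⬝ᵥ (A *ᵥ z) := by
      rw [swap A⁻¹ hAinvsym, hAinvA]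
    have hMz : z ⬝ᵥ ((Φ * Φᵀ) *ᵥ z) + z ⬝ᵥ (A *ᵥ z) = z ⬝ᵥ y := by
      rw [← dotProduct_add, ← add_mulVec, ← hM, hz]
    have hyz : z ⬝ᵥ y = y ⬝ᵥ z := dotProduct_comm _ _
    have hsplit : (Φ *ᵥ θ) ⬝ᵥ z + c ⬝ᵥ z = y ⬝ᵥ z := by
      rw [← add_dotProduct, hdata]
    have hcz : c ⬝ᵥ z = z ⬝ᵥ c := dotProduct_comm _ _
    simp only [hu, hv, dotProduct_sub, sub_dotProduct, mulVec_sub]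
    have e6 : (Φᵀ *ᵥ z) ⬝ᵥ θ = (Φ *ᵥ θ) ⬝ᵥ z := by rw [dotProduct_comm, e1]
    rw [e1, e2, e3', e4, e5, e6]
    linarith [hMz, hyz, hsplit, hcz]
  have := hz
  linarith [hu0, hv0, key.symm.le, key.le]
end

section
/- Let Φ ∈ ℝ^{N×r} with r ≤ N, φ ∈ ℝ^{1×r}, and suppose φᵀ ∈ span of the columns of Φᵀ, i.e., φᵀ = Φᵀλ for some λ ∈ ℝᴺ. Let K^w ∈ ℝ^{N×N} symmetric positive definite and y ∈ ℝᴺ with yᵀ(K^w)⁻¹y ≤ Γ_w². If Φ has full column rank, then the supremum of φθ over θ ∈ ℝ^r subject to (y − Φθ)ᵀ(K^w)⁻¹(y − Φθ) ≤ Γ_w² equals φθ^μ + ‖Pφᵀ‖_{P⁻¹}·√(Γ_w² − yᵀ(K^w)⁻¹y + ‖θ^μ‖²_{P⁻¹}), where P = (Φᵀ(K^w)⁻¹Φ)⁻¹ and θ^μ = PΦᵀ(K^w)⁻¹y. -/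
open Matrix

private lemma symm_dot {n : ℕ} {S : Matrix (Fin n) (Fin n) ℝ} (hS : Sᵀ = S)
    (x z : Fin n → ℝ) : x ⬝ᵥ (S *ᵥ z) = (S *ᵥ x) ⬝ᵥ z := by
  rw [dotProduct_mulVec, ← mulVec_transpose, hS]

private lemma phi_dot {n m : ℕ} (Φ : Matrix (Fin n) (Fin m) ℝ)
    (w : Fin m → ℝ) (z : Fin n → ℝ) : (Φ *ᵥ w) ⬝ᵥ z = w ⬝ᵥ (Φᵀ *ᵥ z) := by
  rw [dotProduct_comm, dotProduct_mulVec, ← mulVec_transpose, dotProduct_comm]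

private lemma posdef_nonneg {n : ℕ} {B : Matrix (Fin n) (Fin n) ℝ} (hB : B.PosDef)
    (x : Fin n → ℝ) : 0 ≤ x ⬝ᵥ (B *ᵥ x) := by
  rcases eq_or_ne x 0 with h | h
  · simp [h]
  · simpa using (hB.dotProduct_mulVec_pos h).le

/-- Case-2 supremum: with φᵀ = Φᵀλ, Φ of full column rank, K^w ≻ 0 and
yᵀ(K^w)⁻¹y ≤ Γ_w², the supremum of φθ over the ellipsoid
(y − Φθ)ᵀ(K^w)⁻¹(y − Φθ) ≤ Γ_w² equals
φθ^μ + ‖Pφᵀ‖_{P⁻¹}·√(Γ_w² − yᵀ(K^w)⁻¹y + ‖θ^μ‖²_{P⁻¹}). -/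
theorem stmt10 (N r : ℕ) (hr : r ≤ N) (Φ : Matrix (Fin N) (Fin r) ℝ)
    (φ : Fin r → ℝ) (lam : Fin N → ℝ) (hφ : φ = Φᵀ *ᵥ lam)
    (hΦ : ∀ x : Fin r → ℝ, Φ *ᵥ x = 0 → x = 0)
    (Kw : Matrix (Fin N) (Fin N) ℝ) (hKw : Kw.PosDef)
    (y : Fin N → ℝ) (Γw : ℝ) (hy : y ⬝ᵥ (Kw⁻¹ *ᵥ y) ≤ Γw ^ 2) :
    letI P : Matrix (Fin r) (Fin r) ℝ := (Φᵀ * Kw⁻¹ * Φ)⁻¹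
    letI θμ : Fin r → ℝ := P *ᵥ (Φᵀ *ᵥ (Kw⁻¹ *ᵥ y))
    IsLUB {v : ℝ | ∃ θ : Fin r → ℝ,
        (y - Φ *ᵥ θ) ⬝ᵥ (Kw⁻¹ *ᵥ (y - Φ *ᵥ θ)) ≤ Γw ^ 2 ∧ v = φ ⬝ᵥ θ}
      (φ ⬝ᵥ θμ + Real.sqrt ((P *ᵥ φ) ⬝ᵥ (P⁻¹ *ᵥ (P *ᵥ φ))) *
        Real.sqrt (Γw ^ 2 - y ⬝ᵥ (Kw⁻¹ *ᵥ y) + θμ ⬝ᵥ (P⁻¹ *ᵥ θμ))) := by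
  set M : Matrix (Fin N) (Fin N) ℝ := Kw⁻¹ with hMdef
  have hM : M.PosDef := hKw.inv
  have hMsymm : Mᵀ = M := by
    have := hM.isHermitian
    simpa [Matrix.IsHermitian, conjTranspose_eq_transpose_of_trivial] using this
  set A : Matrix (Fin r) (Fin r) ℝ := Φᵀ * M * Φ with hAdef
  have hAsymm : Aᵀ = A := by
    rw [hAdef, transpose_mul, transpose_mul, transpose_transpose, hMsymm, ← Matrix.mul_assoc]
  have hA : A.PosDef := by
    refine PosDef.of_dotProduct_mulVec_pos ?_ (fun x hx => ?_)
    · have : Aᴴ = Aᵀ := by ext i j; simp [conjTranspose_apply]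
      rw [Matrix.IsHermitian, this, hAsymm]
    · have h1 : x ⬝ᵥ (A *ᵥ x) = (Φ *ᵥ x) ⬝ᵥ (M *ᵥ (Φ *ᵥ x)) := by
        rw [hAdef, ← mulVec_mulVec, ← mulVec_mulVec, ← phi_dot]
      have hx' : Φ *ᵥ x ≠ 0 := fun h => hx (hΦ x h)
      simpa [h1] using hM.dotProduct_mulVec_pos hx'
  have hdet : IsUnit A.det := hA.det_pos.ne'.isUnit
  have hAA : A * A⁻¹ = 1 := mul_nonsing_inv A hdet
  set P : Matrix (Fin r) (Fin r) ℝ := A⁻¹ with hPA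
  have hPinv : P⁻¹ = A := by rw [hPA, nonsing_inv_nonsing_inv A hdet]
  set b : Fin r → ℝ := Φᵀ *ᵥ (M *ᵥ y) with hbdef
  set θμ : Fin r → ℝ := P *ᵥ b with hθ
  have hAθμ : A *ᵥ θμ = b := by
    rw [hθ, hPA, mulVec_mulVec, hAA, one_mulVec]
  -- key expansion
  have key : ∀ θ : Fin r → ℝ, (y - Φ *ᵥ θ) ⬝ᵥ (M *ᵥ (y - Φ *ᵥ θ))
      = y ⬝ᵥ (M *ᵥ y) - θμ ⬝ᵥ b + (θ - θμ) ⬝ᵥ (A *ᵥ (θ - θμ)) := by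
    intro θ
    have e1 : ∀ w : Fin r → ℝ, (Φ *ᵥ w) ⬝ᵥ (M *ᵥ y) = w ⬝ᵥ b := by
      intro w; rw [phi_dot, hbdef, mulVec_mulVec]
    have e2 : ∀ w : Fin r → ℝ, y ⬝ᵥ (M *ᵥ (Φ *ᵥ w)) = w ⬝ᵥ b := by
      intro w; rw [symm_dot hMsymm, dotProduct_comm, e1]
    have e3 : ∀ w v : Fin r → ℝ, (Φ *ᵥ w) ⬝ᵥ (M *ᵥ (Φ *ᵥ v)) = w ⬝ᵥ (A *ᵥ v) := by
      intro w v; rw [phi_dot, hAdef, ← mulVec_mulVec, ← mulVec_mulVec]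
    have e4 : ∀ w : Fin r → ℝ, θμ ⬝ᵥ (A *ᵥ w) = w ⬝ᵥ b := by
      intro w; rw [symm_dot hAsymm, hAθμ, dotProduct_comm]
    have e5 : ∀ w : Fin r → ℝ, w ⬝ᵥ (A *ᵥ θμ) = w ⬝ᵥ b := by
      intro w; rw [hAθμ]
    simp only [mulVec_sub, dotProduct_sub, sub_dotProduct, e1, e2, e3, e4, e5]
    ring
  -- abbreviations
  set w : Fin r → ℝ := P *ᵥ φ with hwdef
  set s : ℝ := φ ⬝ᵥ w with hsdef
  have hs : 0 ≤ s := by rw [hsdef, hwdef, hPA]; exact posdef_nonneg hA.inv φ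
  have hAw : A *ᵥ w = φ := by rw [hwdef, hPA, mulVec_mulVec, hAA, one_mulVec]
  have hwAu : ∀ u : Fin r → ℝ, w ⬝ᵥ (A *ᵥ u) = φ ⬝ᵥ u := by
    intro u; rw [symm_dot hAsymm, hAw]
  have huAw : ∀ u : Fin r → ℝ, u ⬝ᵥ (A *ᵥ w) = φ ⬝ᵥ u := by
    intro u; rw [hAw, dotProduct_comm]
  have hwAw : w ⬝ᵥ (A *ᵥ w) = s := by rw [hwAu, hsdef]
  have hval1 : w ⬝ᵥ (P⁻¹ *ᵥ w) = s := by rw [hPinv, hwAw]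
  have hval2 : θμ ⬝ᵥ (P⁻¹ *ᵥ θμ) = θμ ⬝ᵥ b := by rw [hPinv, hAθμ]
  rw [hval1, hval2]
  set c : ℝ := Γw ^ 2 - y ⬝ᵥ (M *ᵥ y) + θμ ⬝ᵥ b with hcdef
  have hθμb : 0 ≤ θμ ⬝ᵥ b := by
    rw [← hAθμ]; exact posdef_nonneg hA θμ
  have hc : 0 ≤ c := by rw [hcdef]; linarith
  -- Cauchy-Schwarz
  have CS : ∀ u : Fin r → ℝ, (φ ⬝ᵥ u) ^ 2 ≤ s * (u ⬝ᵥ (A *ᵥ u)) := by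
    intro u
    rcases eq_or_lt_of_le hs with hs0 | hs0
    · have hw0 : w = 0 := by
        by_contra h
        have h1 := hA.dotProduct_mulVec_pos h
        simp only [star_trivial] at h1
        rw [hwAw] at h1
        exact absurd hs0 (by linarith)
      have hφ0 : φ = 0 := by rw [← hAw, hw0, mulVec_zero]
      simp [hφ0, ← hs0]
    · have hq := posdef_nonneg hA (u - (φ ⬝ᵥ u / s) • w)
      have expand : (u - (φ ⬝ᵥ u / s) • w) ⬝ᵥ (A *ᵥ (u - (φ ⬝ᵥ u / s) • w))
          = u ⬝ᵥ (A *ᵥ u) - (φ ⬝ᵥ u) ^ 2 / s := by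
        simp only [mulVec_sub, mulVec_smul, dotProduct_sub, sub_dotProduct,
          dotProduct_smul, smul_dotProduct, smul_eq_mul, hwAu, huAw, hwAw]
        field_simp
        ring
      rw [expand] at hq
      have : (φ ⬝ᵥ u) ^ 2 / s ≤ u ⬝ᵥ (A *ᵥ u) := by linarith
      calc (φ ⬝ᵥ u) ^ 2 = s * ((φ ⬝ᵥ u) ^ 2 / s) := by field_simp
        _ ≤ s * (u ⬝ᵥ (A *ᵥ u)) := by
            exact mul_le_mul_of_nonneg_left this hs
  apply IsGreatest.isLUB
  constructor
  · -- membership: upper bound is attained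
    set t : ℝ := Real.sqrt c / Real.sqrt s with htdef
    have hts : t * s = Real.sqrt s * Real.sqrt c := by
      rcases eq_or_lt_of_le hs with hs0 | hs0
      · simp [htdef, ← hs0]
      · have h1 : Real.sqrt s ≠ 0 := (Real.sqrt_pos.mpr hs0).ne'
        have h2 : Real.sqrt s * Real.sqrt s = s := Real.mul_self_sqrt hs
        rw [htdef, div_mul_eq_mul_div, eq_comm, eq_div_iff h1]
        linear_combination Real.sqrt c * h2
    have hts2 : t ^ 2 * s ≤ c := by
      rcases eq_or_lt_of_le hs with hs0 | hs0
      · rw [← hs0]; simpa using hc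
      · have : t ^ 2 = c / s := by
          rw [htdef, div_pow, Real.sq_sqrt hc, Real.sq_sqrt hs]
        rw [this, div_mul_cancel₀ c hs0.ne']
    refine ⟨θμ + t • w, ?_, ?_⟩
    · rw [key (θμ + t • w), add_sub_cancel_left]
      have : (t • w) ⬝ᵥ (A *ᵥ (t • w)) = t ^ 2 * s := by
        rw [mulVec_smul, dotProduct_smul, smul_dotProduct, hwAw]
        simp [smul_eq_mul]; ring
      rw [this]
      rw [hcdef] at hts2
      linarith
    · rw [dotProduct_add, dotProduct_smul, smul_eq_mul, ← hsdef]
      rw [mul_comm t s, mul_comm] at hts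
      rw [hts]
  · -- upper bound
    rintro v ⟨θ, hcon, rfl⟩
    rw [key θ] at hcon
    have h1 : (θ - θμ) ⬝ᵥ (A *ᵥ (θ - θμ)) ≤ c := by rw [hcdef]; linarith
    have h2 : (φ ⬝ᵥ (θ - θμ)) ^ 2 ≤ s * c := by
      calc (φ ⬝ᵥ (θ - θμ)) ^ 2 ≤ s * ((θ - θμ) ⬝ᵥ (A *ᵥ (θ - θμ))) := CS _
        _ ≤ s * c := mul_le_mul_of_nonneg_left h1 hs
    have h3 : φ ⬝ᵥ (θ - θμ) ≤ Real.sqrt s * Real.sqrt c := by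
      calc φ ⬝ᵥ (θ - θμ) ≤ |φ ⬝ᵥ (θ - θμ)| := le_abs_self _
        _ = Real.sqrt ((φ ⬝ᵥ (θ - θμ)) ^ 2) := (Real.sqrt_sq_eq_abs _).symm
        _ ≤ Real.sqrt (s * c) := Real.sqrt_le_sqrt h2
        _ = Real.sqrt s * Real.sqrt c := Real.sqrt_mul hs c
    rw [dotProduct_sub] at h3
    linarith
end

section
/- Let Φ ∈ ℝ^{N×r}, φ ∈ ℝ^{1×r}, K^w ∈ ℝ^{N×N} symmetric positive definite, y ∈ ℝᴺ, Γ_f > 0, Γ_w > 0, σ > 0 with ΦΦᵀ + σ²K^w invertible, and suppose yᵀ(ΦΦᵀ + σ²K^w)⁻¹y ≤ Γ_f² + Γ_w²/σ². Then the supremum of φθ over pairs (θ, c) ∈ ℝ^r × ℝᴺ subject to Φθ + c = y and ‖θ‖₂² + cᵀ(σ²K^w)⁻¹c ≤ Γ_f² + Γ_w²/σ² equals φθ^{μ,σ} + β_σ·√(φφᵀ − φΦᵀ(ΦΦᵀ + σ²K^w)⁻¹Φφᵀ), where θ^{μ,σ} is such that φθ^{μ,σ} = φΦᵀ(ΦΦᵀ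 + σ²K^w)⁻¹y and β_σ = √(Γ_f² + Γ_w²/σ² − yᵀ(ΦΦᵀ + σ²K^w)⁻¹y). -/
open Matrix

section Aux
variable {n m : Type*} [Fintype n] [Fintype m]

lemma dot_symm (S : Matrix n n ℝ) (hS : Sᵀ = S) (u v : n → ℝ) :
    u ⬝ᵥ (S *ᵥ v) = v ⬝ᵥ (S *ᵥ u) := by
  rw [dotProduct_mulVec, ← mulVec_transpose, hS, dotProduct_comm]

lemma dot_transpose (A : Matrix m n ℝ) (u : n → ℝ) (v : m → ℝ) :
    u ⬝ᵥ (Aᵀ *ᵥ v) = (A *ᵥ u) ⬝ᵥ v := by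
  rw [dotProduct_mulVec, vecMul_transpose, dotProduct_comm]

lemma herm_transpose {S : Matrix n n ℝ} (hS : S.IsHermitian) : Sᵀ = S := by
  rwa [IsHermitian, conjTranspose_eq_transpose_of_trivial] at hS

lemma psd_cauchy_schwarz (P : Matrix n n ℝ) (hP : P.PosSemidef)
    (u d : n → ℝ) :
    (u ⬝ᵥ (P *ᵥ d)) ^ 2 ≤ (u ⬝ᵥ (P *ᵥ u)) * (d ⬝ᵥ (P *ᵥ d)) := by
  have hPt : Pᵀ = P := herm_transpose hP.isHermitian
  have key : ∀ x : ℝ, 0 ≤ (d ⬝ᵥ (P *ᵥ d)) * (x * x) + (2 * (u ⬝ᵥ (P *ᵥ d))) * x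
      + u ⬝ᵥ (P *ᵥ u) := by
    intro x
    have h0 := hP.dotProduct_mulVec_nonneg (u + x • d)
    simp only [star_trivial] at h0
    have expand : (u + x • d) ⬝ᵥ (P *ᵥ (u + x • d)) =
        (d ⬝ᵥ (P *ᵥ d)) * (x * x) + (2 * (u ⬝ᵥ (P *ᵥ d))) * x + u ⬝ᵥ (P *ᵥ u) := by
      rw [mulVec_add, mulVec_smul, dotProduct_add, add_dotProduct, add_dotProduct,
        dotProduct_smul, smul_dotProduct, smul_dotProduct, dotProduct_smul,
        dot_symm P hPt d u]
      simp [smul_eq_mul]; ring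
    rw [expand] at h0
    exact h0
  have := discrim_le_zero key
  rw [discrim] at this
  nlinarith [this]

end Aux

/-- Relaxed bound (finite-dimensional Lemma 1): the supremum of φθ over pairs (θ,c) with
Φθ + c = y and ‖θ‖₂² + cᵀ(σ²K^w)⁻¹c ≤ Γ_f² + Γ_w²/σ² equals the GP posterior mean
plus β_σ times the GP posterior standard deviation (with k = Φφᵀ, κ = φφᵀ). -/
theorem stmt13 (N r : ℕ) (Φ : Matrix (Fin N) (Fin r) ℝ) (φ : Fin r → ℝ)
    (Kw : Matrix (Fin N) (Fin N) ℝ) (hKw : Kw.PosDef)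
    (y : Fin N → ℝ) (Γf Γw σ : ℝ) (hΓf : 0 < Γf) (hΓw : 0 < Γw) (hσ : 0 < σ)
    (hinv : IsUnit (Φ * Φᵀ + σ ^ 2 • Kw))
    (hfeas : y ⬝ᵥ ((Φ * Φᵀ + σ ^ 2 • Kw)⁻¹ *ᵥ y) ≤ Γf ^ 2 + Γw ^ 2 / σ ^ 2) :
    IsLUB {v : ℝ | ∃ (θ : Fin r → ℝ) (c : Fin N → ℝ),
        Φ *ᵥ θ + c = y ∧
        θ ⬝ᵥ θ + c ⬝ᵥ ((σ ^ 2 • Kw)⁻¹ *ᵥ c) ≤ Γf ^ 2 + Γw ^ 2 / σ ^ 2 ∧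
        v = φ ⬝ᵥ θ}
      ((Φ *ᵥ φ) ⬝ᵥ ((Φ * Φᵀ + σ ^ 2 • Kw)⁻¹ *ᵥ y) +
        Real.sqrt (Γf ^ 2 + Γw ^ 2 / σ ^ 2 - y ⬝ᵥ ((Φ * Φᵀ + σ ^ 2 • Kw)⁻¹ *ᵥ y)) *
        Real.sqrt (φ ⬝ᵥ φ - (Φ *ᵥ φ) ⬝ᵥ ((Φ * Φᵀ + σ ^ 2 • Kw)⁻¹ *ᵥ (Φ *ᵥ φ)))) := by
  classical
  have hσ2 : (0:ℝ) < σ ^ 2 := by positivity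
  have hS : (σ ^ 2 • Kw).PosDef := by
    refine Matrix.PosDef.of_dotProduct_mulVec_pos ?_ (fun x hx => ?_)
    · have h : (σ ^ 2 • Kw)ᴴ = σ ^ 2 • Kwᴴ := by
        simp [conjTranspose_smul]
      rw [Matrix.IsHermitian, h, hKw.1.eq]
    · rw [smul_mulVec, dotProduct_smul, smul_eq_mul]
      exact mul_pos hσ2 (hKw.dotProduct_mulVec_pos hx)
  set R2 : ℝ := Γf ^ 2 + Γw ^ 2 / σ ^ 2 with hR2def
  set A : Matrix (Fin N) (Fin N) ℝ := Φ * Φᵀ + σ ^ 2 • Kw with hAdef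
  set Mi : Matrix (Fin N) (Fin N) ℝ := (σ ^ 2 • Kw)⁻¹ with hMidef
  have hMi : Mi.PosDef := hS.inv
  have hMit : Miᵀ = Mi := herm_transpose hMi.isHermitian
  have hSt : (σ ^ 2 • Kw)ᵀ = σ ^ 2 • Kw := herm_transpose hS.isHermitian
  have hdetA : IsUnit A.det := (Matrix.isUnit_iff_isUnit_det A).mp hinv
  have hAu : A * A⁻¹ = 1 := Matrix.mul_nonsing_inv A hdetA
  have hdetS : IsUnit (σ ^ 2 • Kw).det := (Matrix.isUnit_iff_isUnit_det _).mp hS.isUnit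
  have hMiS : Mi * (σ ^ 2 • Kw) = 1 := Matrix.nonsing_inv_mul _ hdetS
  have hSMi : (σ ^ 2 • Kw) * Mi = 1 := Matrix.mul_nonsing_inv _ hdetS
  set P : Matrix (Fin r) (Fin r) ℝ := 1 + Φᵀ * Mi * Φ with hPdef
  have hPsd : (Φᵀ * Mi * Φ).PosSemidef := by
    have h := hMi.posSemidef.conjTranspose_mul_mul_same Φ
    rwa [conjTranspose_eq_transpose_of_trivial] at h
  have hP : P.PosDef := Matrix.PosDef.add_posSemidef Matrix.PosDef.one hPsd
  have hPt : Pᵀ = P := herm_transpose hP.isHermitian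
  have hdetP : IsUnit P.det := (Matrix.isUnit_iff_isUnit_det P).mp hP.isUnit
  have hPP : P * P⁻¹ = 1 := Matrix.mul_nonsing_inv P hdetP
  have hPP' : P⁻¹ * P = 1 := Matrix.nonsing_inv_mul P hdetP
  have hPA : P * Φᵀ = Φᵀ * Mi * A := by
    have h1 : Φᵀ * Mi * (σ ^ 2 • Kw) = Φᵀ := by
      rw [Matrix.mul_assoc, hMiS, Matrix.mul_one]
    rw [hPdef, hAdef, Matrix.add_mul, Matrix.one_mul, Matrix.mul_add, h1,
      ← Matrix.mul_assoc, add_comm]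
  have hkey : Φᵀ * A⁻¹ = P⁻¹ * (Φᵀ * Mi) := by
    have h2 : P * (Φᵀ * A⁻¹) = Φᵀ * Mi := by
      rw [← Matrix.mul_assoc, hPA, Matrix.mul_assoc, hAu, Matrix.mul_one]
    calc Φᵀ * A⁻¹ = (P⁻¹ * P) * (Φᵀ * A⁻¹) := by rw [hPP', Matrix.one_mul]
    _ = P⁻¹ * (Φᵀ * Mi) := by rw [Matrix.mul_assoc, h2]
  set z : Fin N → ℝ := A⁻¹ *ᵥ y with hzdef
  set θh : Fin r → ℝ := Φᵀ *ᵥ z with hθhdef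
  have hAz : A *ᵥ z = y := by
    rw [hzdef, mulVec_mulVec, hAu, one_mulVec]
  have hPθh : P *ᵥ θh = Φᵀ *ᵥ (Mi *ᵥ y) := by
    rw [hθhdef, mulVec_mulVec, hPA, Matrix.mul_assoc, ← mulVec_mulVec,
      ← mulVec_mulVec, hAz]
  have hΦθh : Φ *ᵥ θh = y - (σ ^ 2 • Kw) *ᵥ z := by
    rw [hθhdef, mulVec_mulVec]
    have h : Φ * Φᵀ = A - σ ^ 2 • Kw := by rw [hAdef]; abel
    rw [h, Matrix.sub_mulVec, hAz]
  have hcomp : ∀ θ : Fin r → ℝ,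
      θ ⬝ᵥ θ + (y - Φ *ᵥ θ) ⬝ᵥ (Mi *ᵥ (y - Φ *ᵥ θ))
        = y ⬝ᵥ z + (θ - θh) ⬝ᵥ (P *ᵥ (θ - θh)) := by
    intro θ
    have e1 : θ ⬝ᵥ (P *ᵥ θ) = θ ⬝ᵥ θ + (Φ *ᵥ θ) ⬝ᵥ (Mi *ᵥ (Φ *ᵥ θ)) := by
      rw [hPdef, Matrix.add_mulVec, one_mulVec, dotProduct_add,
        ← mulVec_mulVec, ← mulVec_mulVec, dot_transpose]
    have e2 : θ ⬝ᵥ (P *ᵥ θh) = (Φ *ᵥ θ) ⬝ᵥ (Mi *ᵥ y) := by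
      rw [hPθh, dot_transpose]
    have e3 : θh ⬝ᵥ (P *ᵥ θ) = (Φ *ᵥ θ) ⬝ᵥ (Mi *ᵥ y) := by
      rw [dot_symm P hPt, e2]
    have eSz : ((σ ^ 2 • Kw) *ᵥ z) ⬝ᵥ (Mi *ᵥ y) = y ⬝ᵥ z := by
      have h := dot_transpose (σ ^ 2 • Kw)ᵀ z (Mi *ᵥ y)
      rw [transpose_transpose, hSt] at h
      rw [← h, mulVec_mulVec, hSMi, one_mulVec, dotProduct_comm]
    have e4 : θh ⬝ᵥ (P *ᵥ θh) = y ⬝ᵥ (Mi *ᵥ y) - y ⬝ᵥ z := by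
      rw [hPθh, dot_transpose, hΦθh, sub_dotProduct, eSz]
    have e5 : y ⬝ᵥ (Mi *ᵥ (Φ *ᵥ θ)) = (Φ *ᵥ θ) ⬝ᵥ (Mi *ᵥ y) :=
      dot_symm Mi hMit y (Φ *ᵥ θ)
    simp only [mulVec_sub, Matrix.mulVec_sub, dotProduct_sub, sub_dotProduct]
    rw [e1, e2, e3, e4, e5]
    ring
  set q : ℝ := φ ⬝ᵥ (P⁻¹ *ᵥ φ) with hqdef
  have hq : φ ⬝ᵥ φ - (Φ *ᵥ φ) ⬝ᵥ (A⁻¹ *ᵥ (Φ *ᵥ φ)) = q := by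
    have h6 : (Φ *ᵥ φ) ⬝ᵥ (A⁻¹ *ᵥ (Φ *ᵥ φ)) = φ ⬝ᵥ φ - q := by
      rw [← dot_transpose Φ φ, mulVec_mulVec, mulVec_mulVec, hkey]
      have h7 : P⁻¹ * (Φᵀ * Mi) * Φ = P⁻¹ * (Φᵀ * Mi * Φ) := by
        rw [Matrix.mul_assoc, Matrix.mul_assoc]
      have h8 : Φᵀ * Mi * Φ = P - 1 := by rw [hPdef]; abel
      rw [h7, h8, Matrix.mul_sub, hPP', Matrix.mul_one, Matrix.sub_mulVec,
        one_mulVec, dotProduct_sub]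
    rw [h6]; ring
  have hmean : (Φ *ᵥ φ) ⬝ᵥ z = φ ⬝ᵥ θh := by
    rw [hθhdef, dot_transpose]
  set β2 : ℝ := R2 - y ⬝ᵥ z with hβ2def
  have hβ2 : 0 ≤ β2 := by rw [hβ2def]; linarith
  have hq0 : 0 ≤ q := by
    have h := hP.inv.posSemidef.dotProduct_mulVec_nonneg φ
    simpa [star_trivial, hqdef] using h
  rw [hq, hmean]
  constructor
  · rintro v ⟨θ, c, hc, hcon, rfl⟩
    have hcy : c = y - Φ *ᵥ θ := eq_sub_of_add_eq' hc
    rw [hcy] at hcon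
    rw [hcomp θ] at hcon
    set d : Fin r → ℝ := θ - θh with hddef
    have hd : d ⬝ᵥ (P *ᵥ d) ≤ β2 := by rw [hβ2def]; linarith
    set u : Fin r → ℝ := P⁻¹ *ᵥ φ with hudef
    have hPuφ : P *ᵥ u = φ := by rw [hudef, mulVec_mulVec, hPP, one_mulVec]
    have huPu : u ⬝ᵥ (P *ᵥ u) = q := by rw [hPuφ, dotProduct_comm, hqdef, hudef]
    have hφd : φ ⬝ᵥ d = u ⬝ᵥ (P *ᵥ d) := by
      rw [← hPuφ, dotProduct_comm, dot_symm P hPt d u]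
    have hcs := psd_cauchy_schwarz P hP.posSemidef u d
    rw [huPu] at hcs
    have hqd : q * (d ⬝ᵥ (P *ᵥ d)) ≤ q * β2 := mul_le_mul_of_nonneg_left hd hq0
    have h9 : (φ ⬝ᵥ d) ^ 2 ≤ q * β2 := by rw [hφd]; linarith
    have h10 : φ ⬝ᵥ d ≤ Real.sqrt β2 * Real.sqrt q := by
      have h := Real.sqrt_le_sqrt h9
      rw [Real.sqrt_sq_eq_abs, Real.sqrt_mul hq0, mul_comm] at h
      exact le_trans (le_abs_self _) h
    have h11 : φ ⬝ᵥ θ = φ ⬝ᵥ θh + φ ⬝ᵥ d := by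
      rw [hddef, dotProduct_sub]; ring
    rw [h11]
    linarith
  · intro b hb
    rcases eq_or_lt_of_le hq0 with hq0' | hqpos
    · have hφ0 : φ = 0 := by
        by_contra hφ
        have h := hP.inv.dotProduct_mulVec_pos hφ
        rw [star_trivial, ← hqdef] at h
        linarith [hq0'.symm.le, h]
      have hmem : (0:ℝ) ∈ {v : ℝ | ∃ (θ : Fin r → ℝ) (c : Fin N → ℝ),
          Φ *ᵥ θ + c = y ∧ θ ⬝ᵥ θ + c ⬝ᵥ (Mi *ᵥ c) ≤ R2 ∧ v = φ ⬝ᵥ θ} := by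
        refine ⟨θh, y - Φ *ᵥ θh, by abel, ?_, by rw [hφ0, zero_dotProduct]⟩
        rw [hcomp θh]
        simp only [sub_self, zero_dotProduct]
        linarith
      have hble := hb hmem
      have hT : φ ⬝ᵥ θh + Real.sqrt β2 * Real.sqrt q = 0 := by
        rw [hφ0, zero_dotProduct, ← hq0', Real.sqrt_zero, mul_zero, add_zero]
      rw [hT]
      exact hble
    · set t : ℝ := Real.sqrt β2 / Real.sqrt q with htdef
      set θ0 : Fin r → ℝ := θh + t • (P⁻¹ *ᵥ φ) with hθ0def
      have hqs : Real.sqrt q ≠ 0 := ne_of_gt (Real.sqrt_pos.mpr hqpos)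
      have hd0 : θ0 - θh = t • (P⁻¹ *ᵥ φ) := by rw [hθ0def]; abel
      have hPuφ : P *ᵥ (P⁻¹ *ᵥ φ) = φ := by rw [mulVec_mulVec, hPP, one_mulVec]
      have hdPd : (θ0 - θh) ⬝ᵥ (P *ᵥ (θ0 - θh)) = β2 := by
        rw [hd0, mulVec_smul, dotProduct_smul, smul_dotProduct, smul_eq_mul, smul_eq_mul]
        rw [hPuφ, dotProduct_comm, ← hqdef]
        have hqne : q ≠ 0 := ne_of_gt hqpos
        rw [htdef, ← mul_assoc, div_mul_div_comm, Real.mul_self_sqrt hβ2,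
          Real.mul_self_sqrt hq0, div_mul_cancel₀ _ hqne]
      have hφθ0 : φ ⬝ᵥ θ0 = φ ⬝ᵥ θh + Real.sqrt β2 * Real.sqrt q := by
        rw [hθ0def, dotProduct_add, dotProduct_smul, ← hqdef, smul_eq_mul, htdef]
        congr 1
        rw [div_mul_eq_mul_div, mul_div_assoc, Real.div_sqrt]
      have hmem : φ ⬝ᵥ θh + Real.sqrt β2 * Real.sqrt q ∈
          {v : ℝ | ∃ (θ : Fin r → ℝ) (c : Fin N → ℝ),
          Φ *ᵥ θ + c = y ∧ θ ⬝ᵥ θ + c ⬝ᵥ (Mi *ᵥ c) ≤ R2 ∧ v = φ ⬝ᵥ θ} := by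
        refine ⟨θ0, y - Φ *ᵥ θ0, by abel, ?_, hφθ0.symm⟩
        rw [hcomp θ0, hdPd, hβ2def]
        linarith
      exact hb hmem
end

section
/- Let K^f ∈ ℝ^{(N+1)×(N+1)} be symmetric positive semidefinite, partition it as [[K_{11}, k],[kᵀ, κ]] with K_{11} ∈ ℝ^{N×N}, k ∈ ℝᴺ, κ ∈ ℝ, and assume κ > 0. Let K^w ∈ ℝ^{N×N} symmetric positive definite, y ∈ ℝᴺ, Γ_f, Γ_w > 0. If ‖y − k·(Γ_f/√κ)‖²_{(K^w)⁻¹} ≤ Γ_w², then there exists a pair (θ, c) ∈ ℝ^r × ℝᴺ feasible for the constraints Φθ + c = y, ‖θ‖₂² ≤ Γ_f², cᵀ(K^w)⁻¹c ≤ Γ_w² (where K^f = Φ₊Φ₊ᵀ is any full-rank factorization with Φ ∈ ℝ^{N×r} the training rows and φ the test row) achieving test value φθ = √κ·Γ_f; moreover √κ·Γ_f is the maximum of φθ over all such feasible pairs. -/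
open Matrix

/-- Case 1 (Proposition 1): with K^f factored as Φ₊Φ₊ᵀ (training rows Φ, test row φ, so
K₁₁ = ΦΦᵀ, k = Φφᵀ, κ = φφᵀ > 0), if ‖y − k·(Γ_f/√κ)‖²_{(K^w)⁻¹} ≤ Γ_w² then the maximum
of φθ over feasible pairs (θ,c) with Φθ + c = y, ‖θ‖₂² ≤ Γ_f², cᵀ(K^w)⁻¹c ≤ Γ_w²
equals √κ·Γ_f (and is attained). -/
theorem stmt14 (N r : ℕ) (Φ : Matrix (Fin N) (Fin r) ℝ) (φ : Fin r → ℝ)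
    (Kw : Matrix (Fin N) (Fin N) ℝ) (hKw : Kw.PosDef)
    (y : Fin N → ℝ) (Γf Γw : ℝ) (hΓf : 0 < Γf) (hΓw : 0 < Γw)
    (hκ : 0 < φ ⬝ᵥ φ)
    (hfeas : (y - (Γf / Real.sqrt (φ ⬝ᵥ φ)) • (Φ *ᵥ φ)) ⬝ᵥ
        (Kw⁻¹ *ᵥ (y - (Γf / Real.sqrt (φ ⬝ᵥ φ)) • (Φ *ᵥ φ))) ≤ Γw ^ 2) :
    IsGreatest {v : ℝ | ∃ (θ : Fin r → ℝ) (c : Fin N → ℝ),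
        Φ *ᵥ θ + c = y ∧ θ ⬝ᵥ θ ≤ Γf ^ 2 ∧ c ⬝ᵥ (Kw⁻¹ *ᵥ c) ≤ Γw ^ 2 ∧ v = φ ⬝ᵥ θ}
      (Real.sqrt (φ ⬝ᵥ φ) * Γf) := by
  set s := Real.sqrt (φ ⬝ᵥ φ) with hs
  have hspos : 0 < s := Real.sqrt_pos.2 hκ
  have hs2 : s ^ 2 = φ ⬝ᵥ φ := Real.sq_sqrt hκ.le
  constructor
  · refine ⟨(Γf / s) • φ, y - (Γf / s) • (Φ *ᵥ φ), ?_, ?_, ?_, ?_⟩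
    · rw [Matrix.mulVec_smul]; abel
    · have : ((Γf / s) • φ) ⬝ᵥ ((Γf / s) • φ) = (Γf / s) ^ 2 * (φ ⬝ᵥ φ) := by
        rw [dotProduct_smul, smul_dotProduct]; ring_nf
      rw [this, ← hs2]
      field_simp
      exact le_rfl
    · exact hfeas
    · rw [dotProduct_smul, smul_eq_mul, ← hs2]
      field_simp
  · rintro v ⟨θ, c, -, hθ, -, rfl⟩
    have hcs := Finset.sum_mul_sq_le_sq_mul_sq Finset.univ φ θ
    have hθn : θ ⬝ᵥ θ ≤ Γf ^ 2 := hθ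
    have h1 : (φ ⬝ᵥ θ) ^ 2 ≤ (φ ⬝ᵥ φ) * (θ ⬝ᵥ θ) := by
      simpa [dotProduct, pow_two, Finset.mul_sum, mul_comm, mul_left_comm] using hcs
    have h2 : (φ ⬝ᵥ θ) ^ 2 ≤ (s * Γf) ^ 2 := by
      calc (φ ⬝ᵥ θ) ^ 2 ≤ (φ ⬝ᵥ φ) * (θ ⬝ᵥ θ) := h1
        _ ≤ (φ ⬝ᵥ φ) * Γf ^ 2 := by
            exact mul_le_mul_of_nonneg_left hθn hκ.le
        _ = (s * Γf) ^ 2 := by rw [mul_pow, hs2]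
    calc φ ⬝ᵥ θ ≤ |φ ⬝ᵥ θ| := le_abs_self _
      _ = Real.sqrt ((φ ⬝ᵥ θ) ^ 2) := (Real.sqrt_sq_eq_abs _).symm
      _ ≤ Real.sqrt ((s * Γf) ^ 2) := Real.sqrt_le_sqrt h2
      _ = s * Γf := Real.sqrt_sq (by positivity)
end
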